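/- Let n ≥ m ≥ 2 be integers. Then every subgraph of the complete bipartite graph K_{m,n} with at least m(n−1) edges contains K_{⌊m/2⌋, ⌊n/2⌋} as a subgraph; more precisely, if G is a bipartite graph with bipartition (A, B), |A| = m, |B| = n, and |E(G)| ≥ m(n−1), then there exist subsets A* ⊆ A and B* ⊆ B with |A*| = ⌊m/2⌋ and |B*| ≥ n/2 such that every vertex of A* is adjacent in G to every vertex of B*. -/
import Mathlib


open SimpleGraph

/-- The edge-colored graph `(G, c)` contains a rainbow copy of `H`
passing through the edge `e`. -/
def IsRainbowCopyThrough {W V : Type*} (H : SimpleGraph W) (G : SimpleGraph V)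
    (c : Sym2 V → ℕ) (e : Sym2 V) : Prop :=
  ∃ f : W → V, Function.Injective f ∧
    (∀ ⦃a b⦄, H.Adj a b → G.Adj (f a) (f b)) ∧
    (∀ ⦃a b a' b'⦄, H.Adj a b → H.Adj a' b' →
      c s(f a, f b) = c s(f a', f b') → s(a, b) = s(a', b')) ∧
    ∃ a b, H.Adj a b ∧ e = s(f a, f b)

/-- The edge-colored graph `(G, c)` is weakly `H`-rainbow saturated: there is an
ordering `L` of the non-edges of `G` such that for every list `cs` of pairwise
distinct colors, adding the non-edges one at a time (the `i`-th one in color `cs i`)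
always creates a new rainbow copy of `H` through the added edge. -/
def WeaklyRainbowSat {W V : Type*} [DecidableEq V] (H : SimpleGraph W)
    (G : SimpleGraph V) (c : Sym2 V → ℕ) : Prop :=
  ∃ L : List (Sym2 V), L.Nodup ∧ (∀ e, e ∈ L ↔ e ∈ Gᶜ.edgeSet) ∧
    ∀ cs : List ℕ, cs.length = L.length → cs.Nodup →
      ∀ i : Fin L.length,
        IsRainbowCopyThrough H
          (G ⊔ SimpleGraph.fromEdgeSet {e | e ∈ L.take ((i : ℕ) + 1)})
          (((L.zip cs).take ((i : ℕ) + 1)).foldl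
            (fun c' p => Function.update c' p.1 p.2) c)
          (L.get i)

/-- The weak rainbow saturation number `rwsat(n, H)`: the minimum number of edges
in a weakly `H`-rainbow saturated edge-colored graph on `n` vertices, where by
convention the value is `n.choose 2` if no such graph exists. -/
noncomputable def rwsat {W : Type*} (H : SimpleGraph W) (n : ℕ) : ℕ :=
  sInf ({m | ∃ (G : SimpleGraph (Fin n)) (c : Sym2 (Fin n) → ℕ),
    WeaklyRainbowSat H G c ∧ G.edgeSet.ncard = m} ∪ {n.choose 2})

/-- `δ'(H)`: the minimum degree among vertices of nonzero degree. -/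
noncomputable def minPosDeg {W : Type*} (H : SimpleGraph W) : ℕ :=
  sInf {d | ∃ v, (H.neighborSet v).ncard = d ∧ d ≠ 0}

/-- `A` is contained in `B` as a subgraph (there is an injective graph
homomorphism from `A` to `B`). -/
def ContainsCopy {α β : Type*} (A : SimpleGraph α) (B : SimpleGraph β) : Prop :=
  ∃ f : α → β, Function.Injective f ∧ ∀ ⦃a b⦄, A.Adj a b → B.Adj (f a) (f b)

/-- The Turán number `ex(N, ℋ)` of the family `ℋ = {H - {u, v} : uv ∈ E(H)}`:
the maximum number of edges of an `N`-vertex graph containing no member of `ℋ`. -/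
noncomputable def exFam {W : Type*} (H : SimpleGraph W) (N : ℕ) : ℕ :=
  sSup {m | ∃ G : SimpleGraph (Fin N),
    (∀ u v : W, H.Adj u v → ¬ ContainsCopy (H.induce ({u, v}ᶜ : Set W)) G) ∧
    G.edgeSet.ncard = m}

/-- `f(H)`: the smallest `n` such that for each `N ∈ {n-1, n}` one has
`ex(N, ℋ) ≤ C(N,2) - 2N - 2`. -/
noncomputable def fH {W : Type*} (H : SimpleGraph W) : ℕ :=
  sInf {n | ∀ N ∈ ({n - 1, n} : Set ℕ),
    (exFam H N : ℤ) ≤ (N.choose 2 : ℤ) - 2 * N - 2}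

/-- The coloring `c` is rainbow (injective) on the set `S` of edges. -/
def RainbowOn {V : Type*} (c : Sym2 V → ℕ) (S : Set (Sym2 V)) : Prop :=
  ∀ e₁ ∈ S, ∀ e₂ ∈ S, c e₁ = c e₂ → e₁ = e₂

/-- Let `n ≥ m ≥ 2`. If `G` is a bipartite graph with bipartition `(Fin m, Fin n)`
and at least `m(n-1)` edges, then there are `A* ⊆ Fin m` and `B* ⊆ Fin n` with
`|A*| = ⌊m/2⌋` and `|B*| ≥ n/2` such that every vertex of `A*` is adjacent to
every vertex of `B*`. -/
theorem complete_bipartite_subgraph (m n : ℕ) (hm : 2 ≤ m) (hmn : m ≤ n)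
    (G : SimpleGraph (Fin m ⊕ Fin n))
    (hbip : ∀ u v, G.Adj u v → u.isLeft ≠ v.isLeft)
    (hE : m * (n - 1) ≤ G.edgeSet.ncard) :
    ∃ (A : Finset (Fin m)) (B : Finset (Fin n)),
      A.card = m / 2 ∧ n ≤ 2 * B.card ∧
      ∀ a ∈ A, ∀ b ∈ B, G.Adj (Sum.inl a) (Sum.inr b) := by
  classical
  set k := m / 2 with hk
  set d : Fin m → ℕ := fun a =>
    (Finset.univ.filter fun b : Fin n => ¬ G.Adj (Sum.inl a) (Sum.inr b)).card with hd
  -- each vertex's adjacency count + missing count = n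
  have hsplit : ∀ a : Fin m,
      (Finset.univ.filter fun b : Fin n => G.Adj (Sum.inl a) (Sum.inr b)).card + d a = n := by
    intro a
    have := Finset.card_filter_add_card_filter_not
      (s := (Finset.univ : Finset (Fin n))) (fun b => G.Adj (Sum.inl a) (Sum.inr b))
    simpa using this
  -- Step 1: total missing count is at most m
  have hsum : ∑ a, d a ≤ m := by
    set g : Fin m × Fin n → Sym2 (Fin m ⊕ Fin n) :=
      fun p => s(Sum.inl p.1, Sum.inr p.2) with hgdef
    set P : Finset (Fin m × Fin n) :=
      Finset.univ.filter fun p => G.Adj (Sum.inl p.1) (Sum.inr p.2) with hP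
    have hg : Function.Injective g := by
      rintro ⟨a, b⟩ ⟨a', b'⟩ h
      simp only [hgdef, Sym2.eq_iff] at h
      rcases h with ⟨h1, h2⟩ | ⟨h1, h2⟩
      · simp_all
      · simp at h1
    have hset : G.edgeSet = ↑(P.image g) := by
      ext e
      induction e using Sym2.ind with
      | _ u v =>
        simp only [SimpleGraph.mem_edgeSet, Finset.coe_image, Set.mem_image,
          Finset.mem_coe, Finset.mem_filter, Finset.mem_univ, true_and, hP, hgdef]
        constructor
        · intro huv
          have hlr := hbip u v huv
          cases u with
          | inl a => cases v with
            | inl a' => simp at hlr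
            | inr b => exact ⟨(a, b), huv, rfl⟩
          | inr b => cases v with
            | inl a => exact ⟨(a, b), huv.symm, Sym2.eq_swap⟩
            | inr b' => simp at hlr
        · rintro ⟨⟨a, b⟩, hab, he⟩
          rw [Sym2.eq_iff] at he
          rcases he with ⟨h1, h2⟩ | ⟨h1, h2⟩
          · rw [← h1, ← h2]; exact hab
          · rw [← h1, ← h2]; exact hab.symm
    have hcard : G.edgeSet.ncard = P.card := by
      rw [hset, Set.ncard_coe_finset, Finset.card_image_of_injective _ hg]
    -- P.card as a sum over first coordinate
    have hfib : P.card = ∑ a : Fin m,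
        (Finset.univ.filter fun b : Fin n => G.Adj (Sum.inl a) (Sum.inr b)).card := by
      rw [Finset.card_eq_sum_card_fiberwise
        (f := Prod.fst) (t := Finset.univ) (fun p _ => Finset.mem_univ p.1)]
      refine Finset.sum_congr rfl fun a _ => ?_
      refine Finset.card_bij (fun p _ => p.2) ?_ ?_ ?_
      · rintro ⟨a', b⟩ hp
        simp only [hP, Finset.mem_filter, Finset.mem_univ, true_and] at hp ⊢
        obtain ⟨h1, h2⟩ := hp
        subst h2; exact h1
      · rintro ⟨a1, b1⟩ h1 ⟨a2, b2⟩ h2 h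
        simp only [hP, Finset.mem_filter] at h1 h2
        cases h1.2; cases h2.2
        simp_all
      · intro b hb
        simp only [Finset.mem_filter, Finset.mem_univ, true_and] at hb
        exact ⟨(a, b), by simp [hP, hb], rfl⟩
    -- combine
    have htot : (∑ a : Fin m,
        (Finset.univ.filter fun b : Fin n => G.Adj (Sum.inl a) (Sum.inr b)).card)
        + ∑ a, d a = m * n := by
      rw [← Finset.sum_add_distrib]
      rw [Finset.sum_congr rfl fun a _ => hsplit a]
      simp [Finset.sum_const, mul_comm]
    have hE' : m * (n - 1) ≤ ∑ a : Fin m,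
        (Finset.univ.filter fun b : Fin n => G.Adj (Sum.inl a) (Sum.inr b)).card := by
      rw [← hfib, ← hcard]; exact hE
    have hmn1 : m * (n - 1) + m = m * n := by
      have hn1 : 1 ≤ n := le_trans (by omega) hmn
      calc m * (n - 1) + m = m * ((n - 1) + 1) := by ring
        _ = m * n := by rw [Nat.sub_add_cancel hn1]
    have : m * (n - 1) + ∑ a, d a ≤ m * (n - 1) + m := by
      rw [hmn1, ← htot]; exact Nat.add_le_add_right hE' _
    exact Nat.le_of_add_le_add_left this
  -- Step 2: a k-set A with small total missing count
  have hkm : k ≤ m := Nat.div_le_self m 2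
  obtain ⟨A, hAsub, hAcard⟩ := Finset.exists_subset_card_eq
    (s := (Finset.univ : Finset (Fin m))) (n := k) (by simpa using hkm)
  clear hAsub
  -- choose A minimizing the sum among k-subsets
  obtain ⟨A, hAmem, hAmin⟩ := Finset.exists_min_image
    ((Finset.univ : Finset (Fin m)).powersetCard k) (fun S => ∑ a ∈ S, d a)
    ⟨A, by simp [Finset.mem_powersetCard, hAcard]⟩
  rw [Finset.mem_powersetCard] at hAmem
  obtain ⟨-, hAcard'⟩ := hAmem
  -- swap argument : every element of A has missing count ≤ every element outside
  have hswap : ∀ a ∈ A, ∀ b ∉ A, d a ≤ d b := by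
    intro a ha b hb
    by_contra hlt
    push_neg at hlt
    have hbA : b ∉ A.erase a := fun h => hb (Finset.mem_of_mem_erase h)
    have hA' : (insert b (A.erase a)) ∈
        (Finset.univ : Finset (Fin m)).powersetCard k := by
      rw [Finset.mem_powersetCard]
      refine ⟨Finset.subset_univ _, ?_⟩
      rw [Finset.card_insert_of_notMem hbA, Finset.card_erase_of_mem ha, hAcard']
      have : 1 ≤ k := by
        rw [hk]; omega
      omega
    have := hAmin _ hA'
    rw [Finset.sum_insert hbA] at this
    have he := Finset.sum_erase_add A d ha
    omega
  -- the counting argument: ∑_{A} d ≤ k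
  have hknz : 1 ≤ k := by rw [hk]; omega
  have hAne : A.Nonempty := Finset.card_pos.mp (by omega)
  obtain ⟨a₀, ha₀, hmax⟩ := Finset.exists_max_image A d hAne
  set t := ∑ a ∈ A, d a with ht
  have htk : t ≤ k := by
    set M := d a₀ with hM
    have h1 : t ≤ k * M := by
      have := Finset.sum_le_card_nsmul A d M (fun x hx => hmax x hx)
      simpa [hAcard', mul_comm] using this
    have h2 : Aᶜ.card * M ≤ ∑ a ∈ Aᶜ, d a := by
      have := Finset.card_nsmul_le_sum Aᶜ d M
        (fun x hx => hswap a₀ ha₀ x (Finset.mem_compl.mp hx))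
      simpa using this
    have h3 : t + ∑ a ∈ Aᶜ, d a ≤ m := by
      rw [ht, Finset.sum_add_sum_compl]
      exact hsum
    have hc : A.card + Aᶜ.card = m := by
      rw [Finset.card_add_card_compl]; simp
    set c := Aᶜ.card with hcdef
    -- m * t ≤ m * k
    have key : m * t ≤ m * k := by
      have e1 : c * t ≤ c * (k * M) := Nat.mul_le_mul_left c h1
      have e2 : k * (c * M) ≤ k * ∑ a ∈ Aᶜ, d a := Nat.mul_le_mul_left k h2
      have e3 : k * (t + ∑ a ∈ Aᶜ, d a) ≤ k * m := Nat.mul_le_mul_left k h3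
      have hm' : m = k + c := by omega
      calc m * t = k * t + c * t := by rw [hm']; ring
        _ ≤ k * t + c * (k * M) := by omega
        _ = k * t + k * (c * M) := by ring
        _ ≤ k * t + k * ∑ a ∈ Aᶜ, d a := by omega
        _ = k * (t + ∑ a ∈ Aᶜ, d a) := by ring
        _ ≤ k * m := e3
        _ = m * k := by ring
    exact Nat.le_of_mul_le_mul_left key (by omega)
  -- Step 3: the common neighborhood
  set B : Finset (Fin n) :=
    Finset.univ.filter fun b => ∀ a ∈ A, G.Adj (Sum.inl a) (Sum.inr b) with hB
  refine ⟨A, B, hAcard', ?_, ?_⟩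
  · -- n ≤ 2 * B.card
    have hBc : (Finset.univ.filter fun b : Fin n =>
        ¬ ∀ a ∈ A, G.Adj (Sum.inl a) (Sum.inr b)).card ≤ t := by
      have hsub : (Finset.univ.filter fun b : Fin n =>
          ¬ ∀ a ∈ A, G.Adj (Sum.inl a) (Sum.inr b)) ⊆
          A.biUnion (fun a => Finset.univ.filter fun b : Fin n =>
            ¬ G.Adj (Sum.inl a) (Sum.inr b)) := by
        intro b hb
        simp only [Finset.mem_filter, Finset.mem_univ, true_and] at hb
        push_neg at hb
        obtain ⟨a, ha, hna⟩ := hb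
        exact Finset.mem_biUnion.mpr ⟨a, ha, by simp [hna]⟩
      exact (Finset.card_le_card hsub).trans (Finset.card_biUnion_le)
    have hsplitB : B.card + (Finset.univ.filter fun b : Fin n =>
        ¬ ∀ a ∈ A, G.Adj (Sum.inl a) (Sum.inr b)).card = n := by
      have := Finset.card_filter_add_card_filter_not
        (s := (Finset.univ : Finset (Fin n)))
        (fun b => ∀ a ∈ A, G.Adj (Sum.inl a) (Sum.inr b))
      simpa [hB] using this
    have h2k : 2 * k ≤ m := by rw [hk]; omega
    omega
  · intro a ha b hb
    rw [hB, Finset.mem_filter] at hb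
    exact hb.2 a ha
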